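/- Let f be a univariate real polynomial of degree 2d that is nonnegative on ℝ, and write f(x) = (x−r₁)^{2e₁}(x−r₂)^{2e₂}⋯(x−r_k)^{2e_k}·g(x) where r₁,…,r_k ∈ ℝ are distinct, e₁,…,e_k are positive integers, e = e₁+⋯+e_k, and g is a polynomial of degree 2(d−e) strictly positive on ℝ. Then there is an injective linear map T from symmetric (d−e+1)×(d−e+1) matrices to symmetric (d+1)×(d+1) matrices that maps the Gram spectrahedron of g bijectively onto the Gram spectrahedron of f; in particular, the affine span of GramS(f) has dimension equal to C(d−e, 2). -/

import Mathlib

open Polynomial Finset Matrix Filter Topology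

namespace Stmt12


/-- polynomial with coefficient vector `v` -/
noncomputable def pv (m : ℕ) (v : Fin (m+1) → ℝ) : Polynomial ℝ :=
  ∑ i : Fin (m+1), C (v i) * X ^ (i : ℕ)

lemma natDegree_pv_le (m : ℕ) (v : Fin (m+1) → ℝ) : (pv m v).natDegree ≤ m := by
  refine natDegree_sum_le_of_forall_le _ _ fun i _ => ?_
  calc (C (v i) * X ^ (i:ℕ)).natDegree ≤ (C (v i)).natDegree + (X ^ (i:ℕ) : Polynomial ℝ).natDegree :=
        natDegree_mul_le
    _ ≤ m := by simp [natDegree_X_pow]; omega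

lemma coeff_pv (m : ℕ) (v : Fin (m+1) → ℝ) (a : Fin (m+1)) : (pv m v).coeff a = v a := by
  rw [pv, finset_sum_coeff]
  rw [Finset.sum_eq_single a]
  · simp
  · intro b _ hb
    have : (b:ℕ) ≠ (a:ℕ) := fun h => hb (Fin.ext h)
    simp only [coeff_C_mul, coeff_X_pow]
    rw [if_neg (Ne.symm this), mul_zero]
  · simp

lemma pv_coeff (m : ℕ) (q : Polynomial ℝ) (h : q.natDegree ≤ m) :
    pv m (fun i => q.coeff i) = q := by
  rw [pv]
  conv_rhs => rw [q.as_sum_range' (m+1) (lt_of_le_of_lt h (Nat.lt_succ_self m))]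
  rw [Finset.sum_range fun i => monomial i (q.coeff i)]
  exact Finset.sum_congr rfl fun i _ => by rw [C_mul_X_pow_eq_monomial]

lemma pv_eq_zero_iff (m : ℕ) (v : Fin (m+1) → ℝ) : pv m v = 0 ↔ v = 0 := by
  constructor
  · intro h
    funext a
    have := coeff_pv m v a
    rw [h] at this
    simpa using this.symm
  · rintro rfl; simp [pv]

/-- The Gram polynomial of a matrix. -/
noncomputable def gp (m : ℕ) (Q : Matrix (Fin (m+1)) (Fin (m+1)) ℝ) : Polynomial ℝ :=
  ∑ i : Fin (m+1), ∑ j : Fin (m+1), C (Q i j) * X ^ ((i : ℕ) + (j : ℕ))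

lemma gp_add (m : ℕ) (Q R : Matrix (Fin (m+1)) (Fin (m+1)) ℝ) :
    gp m (Q + R) = gp m Q + gp m R := by
  simp [gp, ← Finset.sum_add_distrib, Matrix.add_apply, C_add, add_mul]

lemma gp_smul (m : ℕ) (c : ℝ) (Q : Matrix (Fin (m+1)) (Fin (m+1)) ℝ) :
    gp m (c • Q) = c • gp m Q := by
  simp [gp, Finset.smul_sum, Matrix.smul_apply, C_mul, smul_eq_mul, mul_assoc, Polynomial.smul_eq_C_mul]

/-- gp as a linear map -/
noncomputable def gpl (m : ℕ) : Matrix (Fin (m+1)) (Fin (m+1)) ℝ →ₗ[ℝ] Polynomial ℝ where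
  toFun := gp m
  map_add' := gp_add m
  map_smul' := gp_smul m

@[simp] lemma gpl_apply (m : ℕ) (Q) : gpl m Q = gp m Q := rfl

lemma gp_outer (m : ℕ) (v w : Fin (m+1) → ℝ) :
    gp m (fun i j => v i * w j) = pv m v * pv m w := by
  erw [pv, pv, Finset.sum_mul_sum, gp]
  refine Finset.sum_congr rfl fun i _ => Finset.sum_congr rfl fun j _ => ?_
  rw [pow_add, C_mul]
  ring

lemma gp_transpose_mul (m N : ℕ) (B : Matrix (Fin N) (Fin (m+1)) ℝ) :
    gp m (Bᵀ * B) = ∑ s : Fin N, (pv m (B s))^2 := by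
  have h : (Bᵀ * B : Matrix (Fin (m+1)) (Fin (m+1)) ℝ) =
      ∑ s : Fin N, (fun i j => B s i * B s j) := by
    ext i j
    simp [Matrix.mul_apply, Matrix.transpose_apply]
  rw [h]
  have hadd : gp m (∑ s : Fin N, (fun i j => B s i * B s j)) =
      ∑ s : Fin N, gp m (fun i j => B s i * B s j) := map_sum (gpl m) _ _
  erw [hadd]
  exact Finset.sum_congr rfl fun s _ => by rw [gp_outer]; ring

lemma natDegree_gp_le (m : ℕ) (Q : Matrix (Fin (m+1)) (Fin (m+1)) ℝ) :
    (gp m Q).natDegree ≤ 2 * m := by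
  refine natDegree_sum_le_of_forall_le _ _ fun i _ => ?_
  refine natDegree_sum_le_of_forall_le _ _ fun j _ => ?_
  calc (C (Q i j) * X ^ ((i:ℕ)+(j:ℕ))).natDegree ≤ 0 + ((i:ℕ)+(j:ℕ)) := by
        refine natDegree_mul_le.trans ?_
        simp [natDegree_X_pow]
    _ ≤ 2 * m := by omega

lemma gramS_iff (m : ℕ) (h : Polynomial ℝ) (Q : Matrix (Fin (m+1)) (Fin (m+1)) ℝ) :
    (Q.PosSemidef ∧ h = gp m Q) ↔ (Q.PosSemidef ∧
      h = ∑ i : Fin (m + 1), ∑ j : Fin (m + 1), C (Q i j) * X ^ ((i : ℕ) + (j : ℕ))) :=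
  Iff.rfl

/-- A nonneg poly tends to atTop on cocompact if its degree is positive. -/
lemma tendsto_cocompact (h : Polynomial ℝ) (hpos : 0 < h.natDegree)
    (hn : ∀ x, 0 ≤ h.eval x) :
    Tendsto (fun x => h.eval x) (cocompact ℝ) atTop := by
  rw [cocompact_eq_atBot_atTop, tendsto_sup]
  constructor
  · -- atBot
    have hc : (h.comp (-X)).natDegree = h.natDegree := by
      rw [natDegree_comp]; simp
    have hdeg : 0 < (h.comp (-X)).degree := by
      rw [← natDegree_pos_iff_degree_pos, hc]; exact hpos
    have habs := Polynomial.abs_tendsto_atTop (h.comp (-X)) hdeg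
    have heq : (fun x => |eval x (h.comp (-X))|) = fun x => eval (-x) h := by
      funext x
      rw [eval_comp]
      simp only [eval_neg, eval_X]
      exact abs_of_nonneg (hn _)
    rw [heq] at habs
    rw [← Filter.map_neg_atTop, tendsto_map'_iff]
    exact habs
  · have habs := Polynomial.abs_tendsto_atTop h (natDegree_pos_iff_degree_pos.1 hpos)
    have heq : (fun x => |eval x h|) = fun x => eval x h := by
      funext x; exact abs_of_nonneg (hn _)
    rwa [heq] at habs

/-- divide out a double root of a nonnegative polynomial -/
lemma double_root_div (h : Polynomial ℝ) (hn : ∀ x, 0 ≤ h.eval x) (x₀ : ℝ)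
    (h0 : h.eval x₀ = 0) :
    ∃ h₁ : Polynomial ℝ, h = (X - C x₀)^2 * h₁ ∧ (∀ x, 0 ≤ h₁.eval x) := by
  have hroot : h.IsRoot x₀ := h0
  set q := h /ₘ (X - C x₀) with hq
  have h1 : (X - C x₀) * q = h := mul_divByMonic_eq_iff_isRoot.2 hroot
  have hmin : IsLocalMin (fun x => h.eval x) x₀ := by
    refine Filter.Eventually.of_forall fun y => ?_
    simp only [h0]; exact hn y
  have hderiv : eval x₀ (derivative h) = 0 := by
    have := hmin.deriv_eq_zero
    rwa [Polynomial.deriv] at this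
  have hq0 : q.eval x₀ = 0 := by
    have hd : derivative h = q + (X - C x₀) * derivative q := by
      rw [← h1, derivative_mul]
      simp
    rw [hd] at hderiv
    simpa using hderiv
  obtain ⟨h₁, hh₁⟩ : ∃ h₁, q = (X - C x₀) * h₁ :=
    ⟨_, (mul_divByMonic_eq_iff_isRoot.2 hq0).symm⟩
  have hfac : h = (X - C x₀)^2 * h₁ := by rw [← h1, hh₁]; ring
  refine ⟨h₁, hfac, ?_⟩
  have key : ∀ x, x ≠ x₀ → 0 ≤ h₁.eval x := by
    intro x hx
    have hev : h.eval x = (x - x₀)^2 * h₁.eval x := by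
      rw [hfac]; simp [eval_pow]
    have hsq : (0:ℝ) < (x - x₀)^2 :=
      lt_of_le_of_ne (sq_nonneg _) (Ne.symm (pow_ne_zero 2 (sub_ne_zero.2 hx)))
    nlinarith [hn x]
  intro x
  rcases eq_or_ne x x₀ with rfl | hx
  · have hcont : ContinuousAt (fun y => h₁.eval y) x := (h₁.continuous).continuousAt
    have hev : ∀ᶠ y in nhdsWithin x {x}ᶜ, 0 ≤ h₁.eval y :=
      eventually_nhdsWithin_of_forall fun y hy => key y hy
    have htend : Tendsto (fun y => h₁.eval y) (nhdsWithin x {x}ᶜ) (nhds (h₁.eval x)) :=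
      hcont.continuousWithinAt.tendsto
    exact ge_of_tendsto htend hev
  · exact key x hx

/-- Every nonnegative real polynomial is a sum of squares of polynomials of
at most half its degree. -/
lemma sos : ∀ n (h : Polynomial ℝ), h.natDegree = n → (∀ x, 0 ≤ h.eval x) →
    ∃ s : Multiset (Polynomial ℝ), h = (s.map (fun a => a^2)).sum ∧
      ∀ a ∈ s, 2 * a.natDegree ≤ h.natDegree := by
  intro n
  induction n using Nat.strong_induction_on with
  | _ n ih =>
    intro h hdeg hn
    rcases Nat.eq_zero_or_pos n with rfl | hpos
    · -- constant case
      have hc : h = C (h.coeff 0) := eq_C_of_natDegree_eq_zero hdeg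
      have hc0 : 0 ≤ h.coeff 0 := by
        have := hn 0
        rwa [hc, eval_C] at this
      refine ⟨{C (Real.sqrt (h.coeff 0))}, ?_, ?_⟩
      · simp only [Multiset.map_singleton, Multiset.sum_singleton]
        rw [← C_pow, Real.sq_sqrt hc0, ← hc]
      · intro a ha
        simp only [Multiset.mem_singleton] at ha
        subst ha
        simp
    · -- positive degree: take global min
      have hmin := (h.continuous).exists_forall_le
        (tendsto_cocompact h (hdeg ▸ hpos) hn)
      obtain ⟨x₀, hx₀⟩ := hmin
      set μ := h.eval x₀ with hμ
      have hμ0 : 0 ≤ μ := hn x₀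
      set h' := h - C μ with hh'
      have hn' : ∀ x, 0 ≤ h'.eval x := by
        intro x
        simp only [hh', eval_sub, eval_C, sub_nonneg]
        exact hx₀ x
      have h'0 : h'.eval x₀ = 0 := by simp [hh', hμ]
      obtain ⟨h₁, hfac, hn₁⟩ := double_root_div h' hn' x₀ h'0
      have hdeg' : h'.natDegree = n := by rw [hh', natDegree_sub_C, hdeg]
      have h'ne : h' ≠ 0 := fun hz => by simp [hz] at hdeg'; omega
      have h₁ne : h₁ ≠ 0 := fun hz => h'ne (by rw [hfac, hz, mul_zero])
      have hdeg₁ : h₁.natDegree + 2 = n := by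
        have := natDegree_mul (p := ((X - C x₀)^2 : Polynomial ℝ)) (q := h₁)
          (pow_ne_zero _ (X_sub_C_ne_zero x₀)) h₁ne
        rw [← hfac, hdeg'] at this
        rw [natDegree_pow, natDegree_X_sub_C] at this
        omega
      obtain ⟨s₁, hs₁, hds₁⟩ := ih h₁.natDegree (by omega) h₁ rfl hn₁
      refine ⟨C (Real.sqrt μ) ::ₘ s₁.map (fun a => (X - C x₀) * a), ?_, ?_⟩
      · rw [Multiset.map_cons, Multiset.sum_cons, Multiset.map_map]
        have : (fun a => ((X - C x₀) * a)^2) = (fun a => (X - C x₀)^2 * a^2) := by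
          funext a; ring
        rw [show ((fun a => a ^ 2) ∘ fun a => (X - C x₀) * a) = fun a => (X - C x₀)^2 * a^2 by
          funext a; simp [Function.comp]; ring]
        rw [Multiset.sum_map_mul_left, ← hs₁, ← hfac, ← C_pow, Real.sq_sqrt hμ0, hh']
        ring
      · intro a ha
        rw [Multiset.mem_cons] at ha
        rcases ha with rfl | ha
        · simp [hdeg]
        · rw [Multiset.mem_map] at ha
          obtain ⟨b, hb, rfl⟩ := ha
          have h1 : ((X - C x₀) * b).natDegree ≤ 1 + b.natDegree := by
            refine natDegree_mul_le.trans ?_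
            rw [natDegree_X_sub_C]
          have h2 := hds₁ b hb
          rw [hdeg]
          omega
lemma psd_multiset_sum {n : ℕ} (t : Multiset (Matrix (Fin n) (Fin n) ℝ))
    (h : ∀ A ∈ t, A.PosSemidef) : t.sum.PosSemidef := by
  induction t using Multiset.induction with
  | empty => simpa using Matrix.PosSemidef.zero
  | cons A t ih =>
    rw [Multiset.sum_cons]
    exact (h A (Multiset.mem_cons_self A t)).add
      (ih fun B hB => h B (Multiset.mem_cons_of_mem hB))

lemma psd_tmul {N n : ℕ} (B : Matrix (Fin N) (Fin n) ℝ) : (Bᵀ * B).PosSemidef := by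
  have := Matrix.posSemidef_conjTranspose_mul_self B
  rwa [Matrix.conjTranspose_eq_transpose_of_trivial] at this

/-- Every nonneg poly of degree at most 2m has a PSD Gram matrix. -/
lemma exists_psd_gram (m : ℕ) (h : Polynomial ℝ) (hdeg : h.natDegree ≤ 2*m)
    (hn : ∀ x, 0 ≤ h.eval x) :
    ∃ Q : Matrix (Fin (m+1)) (Fin (m+1)) ℝ, Q.PosSemidef ∧ gp m Q = h := by
  obtain ⟨s, hsum, hdegs⟩ := sos h.natDegree h rfl hn
  set F : Polynomial ℝ → Matrix (Fin (m+1)) (Fin (m+1)) ℝ :=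
    fun a => (Matrix.of fun (_ : Fin 1) (i : Fin (m+1)) => a.coeff i)ᵀ *
      (Matrix.of fun (_ : Fin 1) (i : Fin (m+1)) => a.coeff i) with hF
  refine ⟨(s.map F).sum, ?_, ?_⟩
  · refine psd_multiset_sum _ fun A hA => ?_
    rw [Multiset.mem_map] at hA
    obtain ⟨a, _, rfl⟩ := hA
    exact psd_tmul _
  · have h1 : gp m (s.map F).sum = ((s.map F).map (gp m)).sum := by
      have := map_multiset_sum (gpl m) (s.map F)
      simpa [Function.comp_def] using this
    rw [h1, Multiset.map_map]
    rw [hsum]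
    congr 1
    refine Multiset.map_congr rfl fun a ha => ?_
    have hda : a.natDegree ≤ m := by have := hdegs a ha; omega
    have := gp_transpose_mul m 1 (Matrix.of fun (_ : Fin 1) (i : Fin (m+1)) => a.coeff i)
    simp only [Function.comp_apply, hF]
    rw [this, Fin.sum_univ_one]
    have hpv : (Matrix.of fun (_ : Fin 1) (i : Fin (m+1)) => a.coeff i) 0 = fun i : Fin (m+1) => a.coeff (i:ℕ) := rfl
    rw [hpv, pv_coeff m a hda]

/-- bounded ratio of two positive polys of equal degree -/
lemma exists_eps (g σp : Polynomial ℝ) (hg : ∀ x, 0 < g.eval x) (hσ : ∀ x, 0 < σp.eval x)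
    (hdeg : σp.degree = g.degree) : ∃ ε : ℝ, 0 < ε ∧ ∀ x, ε * σp.eval x ≤ g.eval x := by
  set ψ := fun x => σp.eval x / g.eval x with hψ
  have hψc : Continuous ψ := (σp.continuous).div (g.continuous) fun x => ne_of_gt (hg x)
  have ht : Tendsto ψ atTop (𝓝 (σp.leadingCoeff / g.leadingCoeff)) :=
    Polynomial.div_tendsto_leadingCoeff_div_of_degree_eq _ _ hdeg
  have hσne : σp.comp (-X) ≠ 0 := fun hz => by
    have := hσ 0
    have h0 : (σp.comp (-X)).eval 0 = σp.eval 0 := by simp [eval_comp]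
    rw [hz] at h0; simp at h0; linarith
  have hgne : g.comp (-X) ≠ 0 := fun hz => by
    have := hg 0
    have h0 : (g.comp (-X)).eval 0 = g.eval 0 := by simp [eval_comp]
    rw [hz] at h0; simp at h0; linarith
  have hgne' : g ≠ 0 := fun hz => by have := hg 0; rw [hz] at this; simp at this
  have hσne' : σp ≠ 0 := fun hz => by have := hσ 0; rw [hz] at this; simp at this
  have hdeg' : (σp.comp (-X)).degree = (g.comp (-X)).degree := by
    rw [degree_eq_natDegree hσne, degree_eq_natDegree hgne, natDegree_comp, natDegree_comp]
    rw [degree_eq_natDegree hσne', degree_eq_natDegree hgne'] at hdeg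
    have : σp.natDegree = g.natDegree := by exact_mod_cast hdeg
    simp [this]
  have htb : Tendsto ψ atBot (𝓝 ((σp.comp (-X)).leadingCoeff / (g.comp (-X)).leadingCoeff)) := by
    rw [← Filter.map_neg_atTop, tendsto_map'_iff]
    have : (ψ ∘ Neg.neg) = fun x => (σp.comp (-X)).eval x / (g.comp (-X)).eval x := by
      funext x; simp [hψ, Function.comp, eval_comp]
    rw [this]
    exact Polynomial.div_tendsto_leadingCoeff_div_of_degree_eq _ _ hdeg'
  -- extract bounds
  set L₁ := σp.leadingCoeff / g.leadingCoeff
  set L₂ := (σp.comp (-X)).leadingCoeff / (g.comp (-X)).leadingCoeff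
  obtain ⟨A, hA⟩ := (ht.eventually (eventually_le_nhds (lt_add_one L₁))).exists_forall_of_atTop
  obtain ⟨B, hB⟩ := (htb.eventually (eventually_le_nhds (lt_add_one L₂))).exists_forall_of_atBot
  obtain ⟨C₀, hC₀⟩ := ((isCompact_Icc (a := B) (b := A)).image hψc).bddAbove
  set C := max (max (L₁ + 1) (L₂ + 1)) (max C₀ (ψ 0)) with hC
  have hCb : ∀ x, ψ x ≤ C := by
    intro x
    rcases le_or_gt A x with hx | hx
    · exact le_trans (hA x hx) (le_trans (le_max_left _ _) (le_max_left _ _))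
    rcases le_or_gt x B with hx' | hx'
    · exact le_trans (hB x hx') (le_trans (le_max_right _ _) (le_max_left _ _))
    · have : ψ x ∈ ψ '' Set.Icc B A := ⟨x, ⟨le_of_lt hx', le_of_lt hx⟩, rfl⟩
      exact le_trans (hC₀ this) (le_trans (le_max_left _ _) (le_max_right _ _))
  have hCpos : 0 < C := by
    have h0 : 0 < ψ 0 := div_pos (hσ 0) (hg 0)
    exact lt_of_lt_of_le h0 (le_trans (le_max_right _ _) (le_max_right _ _))
  refine ⟨C⁻¹, inv_pos.2 hCpos, fun x => ?_⟩
  have hx := hCb x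
  rw [hψ] at hx
  have h2 : σp.eval x ≤ C * g.eval x := by
    rw [div_le_iff₀ (hg x)] at hx
    linarith [hx]
  calc C⁻¹ * σp.eval x ≤ C⁻¹ * (C * g.eval x) := by
        apply mul_le_mul_of_nonneg_left h2 (le_of_lt (inv_pos.2 hCpos))
    _ = g.eval x := by field_simp
/-- symmetric matrices with zero Gram polynomial -/
noncomputable def V0 (m : ℕ) : Submodule ℝ (Matrix (Fin (m+1)) (Fin (m+1)) ℝ) where
  carrier := {Q | Qᵀ = Q ∧ gp m Q = 0}
  add_mem' := by
    rintro a b ⟨ha1, ha2⟩ ⟨hb1, hb2⟩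
    refine ⟨by rw [transpose_add, ha1, hb1], ?_⟩
    have : gp _ (a + b) = gp _ a + gp _ b := by
      rw [← gpl_apply, ← gpl_apply, ← gpl_apply, map_add]
    rw [this, ha2, hb2, add_zero]
  zero_mem' := by
    refine ⟨transpose_zero, ?_⟩
    rw [← gpl_apply, map_zero]
  smul_mem' := by
    rintro c a ⟨ha1, ha2⟩
    refine ⟨by rw [transpose_smul, ha1], ?_⟩
    have : gp _ (c • a) = c • gp _ a := by
      rw [← gpl_apply, ← gpl_apply, _root_.map_smul]
    rw [this, ha2, smul_zero]

lemma mem_V0 (m : ℕ) (Q : Matrix (Fin (m+1)) (Fin (m+1)) ℝ) :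
    Q ∈ V0 m ↔ Qᵀ = Q ∧ gp m Q = 0 := Iff.rfl

/-- the index type of upper-triangular entries -/
abbrev UT (m : ℕ) := {p : Fin (m+1) × Fin (m+1) // p.1 ≤ p.2}

/-- symmetrization linear map -/
noncomputable def Phi (m : ℕ) : (UT m → ℝ) →ₗ[ℝ] Matrix (Fin (m+1)) (Fin (m+1)) ℝ where
  toFun v := Matrix.of fun i j =>
    if h : i ≤ j then v ⟨(i,j), h⟩ else v ⟨(j,i), le_of_not_ge h⟩
  map_add' u v := by
    ext i j
    simp only [Matrix.of_apply, Matrix.add_apply, Pi.add_apply]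
    split_ifs <;> simp
  map_smul' c v := by
    ext i j
    simp only [Matrix.of_apply, Matrix.smul_apply, Pi.smul_apply, RingHom.id_apply]
    split_ifs <;> simp

lemma Phi_def (m : ℕ) (v : UT m → ℝ) (i j : Fin (m+1)) :
    Phi m v i j = if h : i ≤ j then v ⟨(i,j), h⟩ else v ⟨(j,i), le_of_not_ge h⟩ := rfl

lemma Phi_apply_of_le (m : ℕ) (v : UT m → ℝ) {i j : Fin (m+1)} (h : i ≤ j) :
    Phi m v i j = v ⟨(i,j), h⟩ := by
  simp only [Phi, LinearMap.coe_mk, AddHom.coe_mk, Matrix.of_apply, dif_pos h]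

lemma Phi_symm (m : ℕ) (v : UT m → ℝ) : (Phi m v)ᵀ = Phi m v := by
  ext i j
  simp only [Matrix.transpose_apply, Phi, LinearMap.coe_mk, AddHom.coe_mk, Matrix.of_apply]
  rcases le_total i j with h | h
  · rcases eq_or_lt_of_le h with rfl | hlt
    · simp
    · rw [dif_neg (not_le_of_gt hlt), dif_pos h]
  · rcases eq_or_lt_of_le h with rfl | hlt
    · simp
    · rw [dif_pos h, dif_neg (not_le_of_gt hlt)]

lemma Phi_injective (m : ℕ) : Function.Injective (Phi m) := by
  intro u v huv
  funext t
  have h1 := congrFun (congrFun huv t.1.1) t.1.2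
  rw [Phi_apply_of_le m u t.2, Phi_apply_of_le m v t.2] at h1
  simpa using h1

/-- the composition -/
noncomputable def psi (m : ℕ) : (UT m → ℝ) →ₗ[ℝ] Polynomial ℝ := (gpl m).comp (Phi m)

lemma map_ker_psi (m : ℕ) : Submodule.map (Phi m) (LinearMap.ker (psi m)) = V0 m := by
  apply le_antisymm
  · rintro _ ⟨v, hv, rfl⟩
    rw [SetLike.mem_coe, LinearMap.mem_ker, psi, LinearMap.comp_apply, gpl_apply] at hv
    exact ⟨Phi_symm m v, hv⟩
  · rintro Q ⟨hsymm, hzero⟩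
    refine ⟨fun t => Q t.1.1 t.1.2, ?_, ?_⟩
    · rw [SetLike.mem_coe, LinearMap.mem_ker, psi, LinearMap.comp_apply, gpl_apply]
      have hPhiQ : Phi m (fun t => Q t.1.1 t.1.2) = Q := by
        ext i j
        simp only [Phi, LinearMap.coe_mk, AddHom.coe_mk, Matrix.of_apply]
        split_ifs with h
        · rfl
        · exact congrFun (congrFun hsymm i) j
      rw [hPhiQ]; exact hzero
    · ext i j
      simp only [Phi, LinearMap.coe_mk, AddHom.coe_mk, Matrix.of_apply]
      split_ifs with h
      · rfl
      · exact congrFun (congrFun hsymm i) j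

lemma range_psi (m : ℕ) : LinearMap.range (psi m) = degreeLT ℝ (2*m+1) := by
  apply le_antisymm
  · rintro _ ⟨v, rfl⟩
    rw [mem_degreeLT]
    refine lt_of_le_of_lt degree_le_natDegree ?_
    have h := natDegree_gp_le m (Phi m v)
    rw [psi, LinearMap.comp_apply, gpl_apply]
    exact_mod_cast Nat.lt_succ_of_le h
  · intro h hmem
    rw [mem_degreeLT] at hmem
    rcases eq_or_ne h 0 with rfl | hne
    · exact zero_mem _
    have hd : h.natDegree < 2*m+1 := (natDegree_lt_iff_degree_lt hne).2 hmem
    -- construct a preimage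
    set N : ℕ → ℕ := fun c =>
      ((univ : Finset (Fin (m+1) × Fin (m+1))).filter (fun p => (p.1:ℕ) + (p.2:ℕ) = c)).card
      with hN
    set v : UT m → ℝ := fun t => h.coeff ((t.1.1:ℕ) + (t.1.2:ℕ)) / N ((t.1.1:ℕ) + (t.1.2:ℕ))
      with hv
    have hPhi : ∀ i j, Phi m v i j = h.coeff ((i:ℕ)+(j:ℕ)) / N ((i:ℕ)+(j:ℕ)) := by
      intro i j
      rw [Phi_def]
      split_ifs with hle
      · rfl
      · simp only [hv]
        rw [Nat.add_comm (j:ℕ) (i:ℕ)]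
    have hNpos : ∀ c ∈ Finset.range (2*m+1), 0 < N c := by
      intro c hc
      rw [Finset.mem_range] at hc
      rw [hN]
      apply Finset.card_pos.2
      rcases le_or_gt c m with h1 | h1
      · exact ⟨(⟨0, by omega⟩, ⟨c, by omega⟩), by simp⟩
      · refine ⟨(⟨c - m, by omega⟩, ⟨m, by omega⟩), ?_⟩
        simp only [Finset.mem_filter, Finset.mem_univ, true_and]
        omega
    refine ⟨v, ?_⟩
    rw [psi, LinearMap.comp_apply, gpl_apply]
    rw [gp]
    have key : ∑ i : Fin (m+1), ∑ j : Fin (m+1), C (Phi m v i j) * X ^ ((i:ℕ)+(j:ℕ))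
        = ∑ p : Fin (m+1) × Fin (m+1), C (Phi m v p.1 p.2) * X ^ ((p.1:ℕ)+(p.2:ℕ)) := by
      rw [← Finset.sum_product']
      rfl
    rw [key]
    have hmaps : ∀ p : Fin (m+1) × Fin (m+1), p ∈ (univ : Finset _) →
        ((p.1:ℕ)+(p.2:ℕ)) ∈ Finset.range (2*m+1) := by
      intro p _
      rw [Finset.mem_range]
      omega
    rw [← Finset.sum_fiberwise_of_maps_to hmaps]
    have inner : ∀ c ∈ Finset.range (2*m+1),
        (∑ p ∈ (univ : Finset (Fin (m+1) × Fin (m+1))).filter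
            (fun p => (p.1:ℕ)+(p.2:ℕ) = c), C (Phi m v p.1 p.2) * X ^ ((p.1:ℕ)+(p.2:ℕ)))
          = C (h.coeff c) * X ^ c := by
      intro c hc
      have step1 : ∀ p ∈ (univ : Finset (Fin (m+1) × Fin (m+1))).filter
          (fun p => (p.1:ℕ)+(p.2:ℕ) = c),
          C (Phi m v p.1 p.2) * X ^ ((p.1:ℕ)+(p.2:ℕ))
            = C (h.coeff c / N c) * X ^ c := by
        intro p hp
        rw [Finset.mem_filter] at hp
        rw [hPhi, hp.2]
      rw [Finset.sum_congr rfl step1, Finset.sum_const]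
      have hcard : ((univ : Finset (Fin (m+1) × Fin (m+1))).filter
          (fun p => (p.1:ℕ)+(p.2:ℕ) = c)).card = N c := rfl
      rw [hcard, nsmul_eq_mul]
      have : ((N c : ℝ[X])) = C ((N c : ℝ)) := by
        rw [Polynomial.C_eq_natCast]
      rw [this, ← mul_assoc, ← C_mul]
      congr 2
      have hne0 : ((N c : ℝ)) ≠ 0 := Nat.cast_ne_zero.2 (hNpos c hc).ne'
      rw [mul_comm, div_mul_cancel₀ _ hne0]
    rw [Finset.sum_congr rfl inner]
    conv_rhs => rw [h.as_sum_range' (2*m+1) hd]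
    exact Finset.sum_congr rfl fun c _ => by rw [C_mul_X_pow_eq_monomial]

lemma card_UT (m : ℕ) : Fintype.card (UT m) = (m+2).choose 2 := by
  have e : UT m ≃ Σ j : Fin (m+1), Fin ((j:ℕ)+1) :=
    { toFun := fun t => ⟨t.1.2, ⟨t.1.1, by have := t.2; omega⟩⟩
      invFun := fun s => ⟨(⟨(s.2 : ℕ), by have h1 := s.2.isLt; have h2 := s.1.isLt; omega⟩, s.1),
        Fin.le_def.mpr (by simpa using Nat.lt_succ_iff.mp s.2.isLt)⟩
      left_inv := fun t => rfl
      right_inv := fun s => rfl }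
  rw [Fintype.card_congr e, Fintype.card_sigma]
  simp only [Fintype.card_fin]
  rw [Fin.sum_univ_eq_sum_range (fun i => i + 1) (m+1)]
  have h1 : ∑ i ∈ Finset.range (m+1), (i+1) = ∑ i ∈ Finset.range (m+2), i := by
    rw [Finset.sum_range_succ' (fun i => i) (m+1)]
    simp
  rw [h1]
  have h2 := Finset.sum_range_id_mul_two (m+2)
  have h3 := Nat.choose_two_right (m+2)
  omega

lemma finrank_V0 (m : ℕ) : Module.finrank ℝ (V0 m) = m.choose 2 := by
  have h1 : Module.finrank ℝ (LinearMap.range (psi m)) = 2*m+1 := by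
    rw [range_psi]
    rw [(Polynomial.degreeLTEquiv ℝ (2*m+1)).finrank_eq, Module.finrank_fin_fun]
  have h2 := LinearMap.finrank_range_add_finrank_ker (psi m)
  have h3 : Module.finrank ℝ (UT m → ℝ) = (m+2).choose 2 := by
    rw [Module.finrank_fintype_fun_eq_card, card_UT]
  have h4 : Module.finrank ℝ (V0 m) = Module.finrank ℝ (LinearMap.ker (psi m)) := by
    rw [← map_ker_psi]
    exact (Submodule.equivMapOfInjective (Phi m) (Phi_injective m)
      (LinearMap.ker (psi m))).finrank_eq.symm
  have h5 : (m+2).choose 2 = (m+1) + (m + m.choose 2) := by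
    rw [show m+2 = (m+1)+1 from rfl, Nat.choose_succ_succ (m+1) 1]
    rw [Nat.choose_succ_succ m 1]
    simp [Nat.choose_one_right]
  rw [h4]
  omega

lemma gp_one (m : ℕ) : gp m (1 : Matrix (Fin (m+1)) (Fin (m+1)) ℝ)
    = ∑ i : Fin (m+1), X ^ (2*(i:ℕ)) := by
  rw [gp]
  refine Finset.sum_congr rfl fun i _ => ?_
  rw [Finset.sum_eq_single i]
  · rw [Matrix.one_apply_eq]
    rw [_root_.map_one, one_mul]
    congr 1
    omega
  · intro j _ hj
    rw [Matrix.one_apply_ne (Ne.symm hj)]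
    simp
  · simp

lemma sig_eval_pos (m : ℕ) (x : ℝ) : 0 < (gp m (1 : Matrix (Fin (m+1)) (Fin (m+1)) ℝ)).eval x := by
  rw [gp_one]
  rw [eval_finset_sum]
  have h1 : (1:ℝ) ≤ ∑ i : Fin (m+1), eval x (X ^ (2*(i:ℕ))) := by
    have := Finset.single_le_sum (f := fun i : Fin (m+1) => eval x (X ^ (2*(i:ℕ))))
      (fun i _ => by simp [eval_pow, pow_mul]; exact pow_nonneg (sq_nonneg x) _) (Finset.mem_univ 0)
    simpa using this
  linarith

lemma sig_degree (m : ℕ) : (gp m (1 : Matrix (Fin (m+1)) (Fin (m+1)) ℝ)).degree = (2*m : ℕ) := by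
  have hc : (gp m (1 : Matrix (Fin (m+1)) (Fin (m+1)) ℝ)).coeff (2*m) = 1 := by
    rw [gp_one, finset_sum_coeff]
    rw [Finset.sum_eq_single (Fin.last m)]
    · rw [coeff_X_pow]
      simp [Fin.last]
    · intro j _ hj
      rw [coeff_X_pow, if_neg]
      have : (j:ℕ) < m := by
        have h1 := j.isLt
        rcases Nat.lt_succ_iff_lt_or_eq.1 h1 with h | h
        · exact h
        · exact absurd (Fin.ext h) hj
      omega
    · simp
  have hne : gp m (1 : Matrix (Fin (m+1)) (Fin (m+1)) ℝ) ≠ 0 := fun hz => by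
    rw [hz] at hc; simp at hc
  have hge : 2*m ≤ (gp m (1 : Matrix (Fin (m+1)) (Fin (m+1)) ℝ)).natDegree :=
    le_natDegree_of_ne_zero (by rw [hc]; exact one_ne_zero)
  have := natDegree_gp_le m (1 : Matrix (Fin (m+1)) (Fin (m+1)) ℝ)
  rw [degree_eq_natDegree hne]
  have heq : (gp m (1 : Matrix (Fin (m+1)) (Fin (m+1)) ℝ)).natDegree = 2*m := le_antisymm this hge
  exact_mod_cast congrArg (Nat.cast : ℕ → WithBot ℕ) heq

lemma quad_bound {n : ℕ} (W : Matrix (Fin n) (Fin n) ℝ) (x : Fin n → ℝ) :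
    |x ⬝ᵥ W.mulVec x| ≤ (∑ i, ∑ j, |W i j|) * (x ⬝ᵥ x) := by
  have hxx : ∀ i j : Fin n, |x i| * |x j| ≤ x ⬝ᵥ x := by
    intro i j
    have hii : x i * x i ≤ x ⬝ᵥ x := Finset.single_le_sum
      (f := fun l => x l * x l) (fun l _ => mul_self_nonneg _) (Finset.mem_univ i)
    have hjj : x j * x j ≤ x ⬝ᵥ x := Finset.single_le_sum
      (f := fun l => x l * x l) (fun l _ => mul_self_nonneg _) (Finset.mem_univ j)
    nlinarith [sq_nonneg (|x i| - |x j|), abs_nonneg (x i), abs_nonneg (x j),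
      sq_abs (x i), sq_abs (x j)]
  have expand : x ⬝ᵥ W.mulVec x = ∑ i, ∑ j, x i * (W i j * x j) := by
    rw [dotProduct]
    refine Finset.sum_congr rfl fun i _ => ?_
    simp only [Matrix.mulVec, dotProduct]
    rw [Finset.mul_sum]
  rw [expand]
  calc |∑ i, ∑ j, x i * (W i j * x j)| ≤ ∑ i, |∑ j, x i * (W i j * x j)| :=
        Finset.abs_sum_le_sum_abs _ _
    _ ≤ ∑ i, ∑ j, |x i * (W i j * x j)| :=
        Finset.sum_le_sum fun i _ => Finset.abs_sum_le_sum_abs _ _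
    _ ≤ ∑ i, ∑ j, |W i j| * (x ⬝ᵥ x) := by
        refine Finset.sum_le_sum fun i _ => Finset.sum_le_sum fun j _ => ?_
        rw [abs_mul, abs_mul]
        calc |x i| * (|W i j| * |x j|) = |W i j| * (|x i| * |x j|) := by ring
          _ ≤ |W i j| * (x ⬝ᵥ x) :=
            mul_le_mul_of_nonneg_left (hxx i j) (abs_nonneg _)
    _ = (∑ i, ∑ j, |W i j|) * (x ⬝ᵥ x) := by
        rw [Finset.sum_mul]
        exact Finset.sum_congr rfl fun i _ => by rw [Finset.sum_mul]

lemma dot_self_nonneg {n : ℕ} (x : Fin n → ℝ) : 0 ≤ x ⬝ᵥ x :=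
  Finset.sum_nonneg fun l _ => mul_self_nonneg _

lemma psd_perturb {n : ℕ} (ε t : ℝ) (W : Matrix (Fin n) (Fin n) ℝ) (hW : Wᵀ = W)
    (hε : 0 < ε) (ht : 0 ≤ t) (hbound : t * (∑ i, ∑ j, |W i j|) ≤ ε) :
    (ε • (1 : Matrix (Fin n) (Fin n) ℝ) + t • W).PosSemidef := by
  refine Matrix.PosSemidef.of_dotProduct_mulVec_nonneg ?_ ?_
  · -- Hermitian
    rw [Matrix.IsHermitian, Matrix.conjTranspose_eq_transpose_of_trivial,
      Matrix.transpose_add, Matrix.transpose_smul, Matrix.transpose_smul,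
      Matrix.transpose_one, hW]
  · intro x
    have hform : (star x) ⬝ᵥ ((ε • (1 : Matrix (Fin n) (Fin n) ℝ) + t • W).mulVec x)
        = ε * (x ⬝ᵥ x) + t * (x ⬝ᵥ W.mulVec x) := by
      have hsx : (star x) = x := by
        funext i; simp
      rw [hsx, Matrix.add_mulVec, dotProduct_add]
      congr 1
      · rw [Matrix.smul_mulVec, Matrix.one_mulVec, dotProduct_smul, smul_eq_mul]
      · rw [Matrix.smul_mulVec, dotProduct_smul, smul_eq_mul]
    rw [hform]
    have hb := quad_bound W x
    have hd := dot_self_nonneg x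
    have habs := abs_nonneg (x ⬝ᵥ W.mulVec x)
    have hS : 0 ≤ ∑ i, ∑ j, |W i j| :=
      Finset.sum_nonneg fun i _ => Finset.sum_nonneg fun j _ => abs_nonneg _
    have h1 : -(x ⬝ᵥ W.mulVec x) ≤ (∑ i, ∑ j, |W i j|) * (x ⬝ᵥ x) := by
      have := neg_abs_le (x ⬝ᵥ W.mulVec x)
      linarith
    nlinarith [mul_le_mul_of_nonneg_right hbound hd,
      mul_le_mul_of_nonneg_left h1 ht]
lemma direction_gram (m : ℕ) (g : Polynomial ℝ) (hdeg : g.natDegree = 2*m)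
    (hgpos : ∀ x, 0 < g.eval x) :
    (affineSpan ℝ {Q : Matrix (Fin (m+1)) (Fin (m+1)) ℝ |
      Q.PosSemidef ∧ g = gp m Q}).direction = V0 m := by
  set σp := gp m (1 : Matrix (Fin (m+1)) (Fin (m+1)) ℝ) with hσp
  have hgne : g ≠ 0 := fun hz => by
    have := hgpos 0; rw [hz] at this; simp at this
  have hdeq : σp.degree = g.degree := by
    rw [hσp, sig_degree, degree_eq_natDegree hgne, hdeg]
  obtain ⟨ε, hε, hbound⟩ := exists_eps g σp hgpos (sig_eval_pos m) hdeq
  have hnn : ∀ x, 0 ≤ (g - C ε * σp).eval x := by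
    intro x
    rw [eval_sub, eval_mul, eval_C, sub_nonneg]
    exact hbound x
  have hdle : (g - C ε * σp).natDegree ≤ 2*m := by
    have hσd : (C ε * σp).natDegree ≤ 2*m := by
      refine natDegree_mul_le.trans ?_
      rw [natDegree_C, hσp]
      simpa using natDegree_gp_le m 1
    exact (natDegree_sub_le _ _).trans (max_le (le_of_eq hdeg) hσd)
  obtain ⟨Q₁, hQ₁psd, hQ₁⟩ := exists_psd_gram m (g - C ε * σp) hdle hnn
  set Q₀ := Q₁ + ε • (1 : Matrix (Fin (m+1)) (Fin (m+1)) ℝ) with hQ₀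
  have hsmul : gp m (ε • (1 : Matrix (Fin (m+1)) (Fin (m+1)) ℝ)) = C ε * σp := by
    have h1 : gp m (ε • (1 : Matrix (Fin (m+1)) (Fin (m+1)) ℝ)) = ε • σp := by
      rw [← gpl_apply, _root_.map_smul, gpl_apply, hσp]
    rw [h1, Polynomial.smul_eq_C_mul]
  have hQ₀gp : gp m Q₀ = g := by
    rw [hQ₀, ← gpl_apply, map_add, gpl_apply, gpl_apply, hQ₁, hsmul]
    ring
  have hQ₀psd : Q₀.PosSemidef := by
    refine hQ₁psd.add ?_
    have := psd_perturb (n := m+1) ε 0 0 (by simp) hε le_rfl (by simp [hε.le])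
    simpa using this
  have hQ₀mem : Q₀ ∈ {Q : Matrix (Fin (m+1)) (Fin (m+1)) ℝ | Q.PosSemidef ∧ g = gp m Q} :=
    ⟨hQ₀psd, hQ₀gp.symm⟩
  apply le_antisymm
  · have hsub : {Q : Matrix (Fin (m+1)) (Fin (m+1)) ℝ | Q.PosSemidef ∧ g = gp m Q} ⊆
        (AffineSubspace.mk' Q₀ (V0 m) : Set _) := by
      rintro Q ⟨hpsd, hgp⟩
      rw [SetLike.mem_coe, AffineSubspace.mem_mk']
      rw [mem_V0]
      constructor
      · have h1 : Qᵀ = Q := by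
          have := hpsd.1
          rwa [Matrix.IsHermitian, Matrix.conjTranspose_eq_transpose_of_trivial] at this
        have h2 : Q₀ᵀ = Q₀ := by
          have := hQ₀psd.1
          rwa [Matrix.IsHermitian, Matrix.conjTranspose_eq_transpose_of_trivial] at this
        show (Q - Q₀)ᵀ = Q - Q₀
        rw [Matrix.transpose_sub, h1, h2]
      · show gp m (Q - Q₀) = 0
        rw [← gpl_apply, map_sub, gpl_apply, gpl_apply, ← hgp, hQ₀gp, sub_self]
    calc (affineSpan ℝ _).direction ≤ (AffineSubspace.mk' Q₀ (V0 m)).direction :=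
          AffineSubspace.direction_le (affineSpan_le.2 hsub)
      _ = V0 m := AffineSubspace.direction_mk' _ _
  · intro W hW
    obtain ⟨hWs, hWgp⟩ := (mem_V0 m W).1 hW
    set S := ∑ i, ∑ j, |W i j| with hS
    have hSnn : 0 ≤ S := Finset.sum_nonneg fun i _ => Finset.sum_nonneg fun j _ => abs_nonneg _
    set t := ε / (S + 1) with hts
    have htpos : 0 < t := div_pos hε (by linarith)
    have htb : t * S ≤ ε := by
      rw [hts, div_mul_eq_mul_div, div_le_iff₀ (by linarith : (0:ℝ) < S + 1)]
      nlinarith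
    have hpsd2 : (Q₀ + t • W).PosSemidef := by
      have h2 : Q₀ + t • W = Q₁ + (ε • 1 + t • W) := by rw [hQ₀]; rw [add_assoc]
      rw [h2]
      exact hQ₁psd.add (psd_perturb ε t W hWs hε htpos.le htb)
    have hgp2 : gp m (Q₀ + t • W) = g := by
      rw [← gpl_apply, map_add, _root_.map_smul, gpl_apply, gpl_apply, hQ₀gp, hWgp]
      simp
    have h1 : Q₀ + t • W ∈ affineSpan ℝ
        {Q : Matrix (Fin (m+1)) (Fin (m+1)) ℝ | Q.PosSemidef ∧ g = gp m Q} :=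
      mem_affineSpan ℝ ⟨hpsd2, hgp2.symm⟩
    have h2 : Q₀ ∈ affineSpan ℝ
        {Q : Matrix (Fin (m+1)) (Fin (m+1)) ℝ | Q.PosSemidef ∧ g = gp m Q} :=
      mem_affineSpan ℝ hQ₀mem
    have h3 := AffineSubspace.vsub_mem_direction h1 h2
    have h4 : (Q₀ + t • W) -ᵥ Q₀ = t • W := by
      show (Q₀ + t • W) - Q₀ = t • W
      exact add_sub_cancel_left Q₀ (t • W)
    rw [h4] at h3
    have h5 : W = t⁻¹ • (t • W) := by
      rw [smul_smul, inv_mul_cancel₀ htpos.ne', one_smul]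
    rw [h5]
    exact Submodule.smul_mem _ _ h3
/-- conjugation by a rectangular matrix, as a linear map -/
noncomputable def conjL (m d : ℕ) (M : Matrix (Fin (m+1)) (Fin (d+1)) ℝ) :
    Matrix (Fin (m+1)) (Fin (m+1)) ℝ →ₗ[ℝ] Matrix (Fin (d+1)) (Fin (d+1)) ℝ where
  toFun Q := Mᵀ * Q * M
  map_add' Q R := by
    show Mᵀ * (Q + R) * M = Mᵀ * Q * M + Mᵀ * R * M
    rw [Matrix.mul_add, Matrix.add_mul]
  map_smul' c Q := by
    show Mᵀ * (c • Q) * M = c • (Mᵀ * Q * M)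
    rw [Matrix.mul_smul, Matrix.smul_mul]

lemma conjL_apply (m d : ℕ) (M : Matrix (Fin (m+1)) (Fin (d+1)) ℝ) (Q) :
    conjL m d M Q = Mᵀ * Q * M := rfl

/-- expansion of entries of the conjugated matrix -/
lemma conj_entry (m d : ℕ) (M : Matrix (Fin (m+1)) (Fin (d+1)) ℝ)
    (Q : Matrix (Fin (m+1)) (Fin (m+1)) ℝ) (a b : Fin (d+1)) :
    (Mᵀ * Q * M) a b = ∑ ij : Fin (m+1) × Fin (m+1), M ij.1 a * Q ij.1 ij.2 * M ij.2 b := by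
  rw [Matrix.mul_apply]
  have h1 : ∀ j, (Mᵀ * Q) a j * M j b = ∑ i, M i a * Q i j * M j b := by
    intro j
    rw [Matrix.mul_apply, Finset.sum_mul]
    exact Finset.sum_congr rfl fun i _ => by rw [Matrix.transpose_apply]
  rw [Finset.sum_congr rfl fun j _ => h1 j, Finset.sum_comm, ← Finset.sum_product']
  rfl

/-- the key Gram-polynomial transformation identity -/
lemma gp_conj (m d : ℕ) (M : Matrix (Fin (m+1)) (Fin (d+1)) ℝ) (p : Polynomial ℝ)
    (hrow : ∀ i : Fin (m+1), pv d (M i) = p * X^(i:ℕ))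
    (Q : Matrix (Fin (m+1)) (Fin (m+1)) ℝ) :
    gp d (Mᵀ * Q * M) = p^2 * gp m Q := by
  have hgp : gp d (Mᵀ * Q * M)
      = ∑ ab : Fin (d+1) × Fin (d+1), C ((Mᵀ * Q * M) ab.1 ab.2) * X^((ab.1:ℕ)+(ab.2:ℕ)) := by
    rw [gp, ← Finset.sum_product']
    rfl
  rw [hgp]
  have step1 : ∀ ab : Fin (d+1) × Fin (d+1),
      C ((Mᵀ * Q * M) ab.1 ab.2) * X^((ab.1:ℕ)+(ab.2:ℕ))
      = ∑ ij : Fin (m+1) × Fin (m+1),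
          C (M ij.1 ab.1 * Q ij.1 ij.2 * M ij.2 ab.2) * X^((ab.1:ℕ)+(ab.2:ℕ)) := by
    intro ab
    rw [conj_entry, map_sum, Finset.sum_mul]
  rw [Finset.sum_congr rfl fun ab _ => step1 ab]
  rw [Finset.sum_comm]
  have step2 : ∀ ij : Fin (m+1) × Fin (m+1),
      (∑ ab : Fin (d+1) × Fin (d+1),
        C (M ij.1 ab.1 * Q ij.1 ij.2 * M ij.2 ab.2) * X^((ab.1:ℕ)+(ab.2:ℕ)))
      = C (Q ij.1 ij.2) * (pv d (M ij.1) * pv d (M ij.2)) := by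
    intro ij
    have hpp : pv d (M ij.1) * pv d (M ij.2)
        = ∑ ab : Fin (d+1) × Fin (d+1),
            C (M ij.1 ab.1) * C (M ij.2 ab.2) * X^((ab.1:ℕ)+(ab.2:ℕ)) := by
      rw [pv, pv, Finset.sum_mul_sum, ← Finset.sum_product']
      refine Finset.sum_congr rfl fun ab _ => ?_
      rw [pow_add]
      ring
    rw [hpp, Finset.mul_sum]
    refine Finset.sum_congr rfl fun ab _ => ?_
    rw [C_mul, C_mul]
    ring
  rw [Finset.sum_congr rfl fun ij _ => step2 ij]
  have step3 : ∀ ij : Fin (m+1) × Fin (m+1),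
      C (Q ij.1 ij.2) * (pv d (M ij.1) * pv d (M ij.2))
      = p^2 * (C (Q ij.1 ij.2) * X^((ij.1:ℕ)+(ij.2:ℕ))) := by
    intro ij
    rw [hrow ij.1, hrow ij.2, pow_add]
    ring
  rw [Finset.sum_congr rfl fun ij _ => step3 ij]
  rw [← Finset.mul_sum, gp, ← Finset.sum_product']
  rfl

/-- injectivity of the conjugation map when the rows of M are coefficient vectors
of p * X^i -/
lemma conjL_inj (m d : ℕ) (M : Matrix (Fin (m+1)) (Fin (d+1)) ℝ) (p : Polynomial ℝ)
    (hp : p ≠ 0) (hpd : p.natDegree + m ≤ d)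
    (hrow : ∀ i : Fin (m+1), pv d (M i) = p * X^(i:ℕ)) :
    Function.Injective (conjL m d M) := by
  have hM : ∀ i : Fin (m+1), ∀ a : Fin (d+1), M i a = (p * X^(i:ℕ)).coeff a := by
    intro i a
    rw [← hrow i, coeff_pv]
  -- key: Mᵀ.mulVec is injective
  have hvec : ∀ v : Fin (m+1) → ℝ, Mᵀ.mulVec v = 0 → v = 0 := by
    intro v hv
    have hpoly : p * pv m v = ∑ i : Fin (m+1), C (v i) * (p * X^(i:ℕ)) := by
      rw [pv, Finset.mul_sum]
      exact Finset.sum_congr rfl fun i _ => by ring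
    have hco : ∀ a : Fin (d+1), (p * pv m v).coeff a = Mᵀ.mulVec v a := by
      intro a
      rw [hpoly, finset_sum_coeff]
      rw [Matrix.mulVec, dotProduct]
      refine Finset.sum_congr rfl fun i _ => ?_
      rw [coeff_C_mul, Matrix.transpose_apply, hM i a]
      ring
    have hdeg : (p * pv m v).natDegree ≤ d := by
      refine natDegree_mul_le.trans ?_
      have := natDegree_pv_le m v
      omega
    have hz : p * pv m v = 0 := by
      ext n
      rcases le_or_gt n d with hn | hn
      · have := hco ⟨n, by omega⟩
        rw [hv] at this
        simpa using this
      · rw [coeff_eq_zero_of_natDegree_lt (lt_of_le_of_lt hdeg hn)]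
        simp
    rcases mul_eq_zero.1 hz with h | h
    · exact absurd h hp
    · exact (pv_eq_zero_iff m v).1 h
  have hmat : ∀ (k : ℕ) (A : Matrix (Fin (m+1)) (Fin k) ℝ), Mᵀ * A = 0 → A = 0 := by
    intro k A hA
    ext i c
    have : Mᵀ.mulVec (fun i' => A i' c) = 0 := by
      funext a
      have := congrFun (congrFun hA a) c
      rw [Matrix.mul_apply] at this
      rw [Matrix.mulVec, dotProduct]
      simpa using this
    have hv0 := hvec _ this
    have := congrFun hv0 i
    simpa using this
  intro Q Q' h
  have hsub : conjL m d M (Q - Q') = 0 := by rw [map_sub, h, sub_self]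
  rw [conjL_apply] at hsub
  have h1 : Mᵀ * ((Q - Q') * M) = 0 := by rw [← Matrix.mul_assoc]; exact hsub
  have h2 : (Q - Q') * M = 0 := hmat _ _ h1
  have h3 : Mᵀ * (Q - Q')ᵀ = 0 := by
    rw [← Matrix.transpose_mul, h2, Matrix.transpose_zero]
  have h4 : (Q - Q')ᵀ = 0 := hmat _ _ h3
  have h5 : Q - Q' = 0 := by
    have := congrArg Matrix.transpose h4
    rwa [Matrix.transpose_transpose, Matrix.transpose_zero] at this
  exact sub_eq_zero.1 h5

/-- divisibility of summands of a sum of squares -/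
lemma sq_sum_dvd (ρ : ℝ) : ∀ (n : ℕ) (N : ℕ) (q : Fin N → Polynomial ℝ),
    (∑ s, (q s)^2) ≠ 0 → (X - C ρ)^(2*n) ∣ (∑ s, (q s)^2) →
    ∀ s, (X - C ρ)^n ∣ q s := by
  intro n
  induction n with
  | zero => intro N q _ _ s; simpa using one_dvd _
  | succ n ih =>
    intro N q hne hdvd s
    have hroot : ∀ s', (q s').eval ρ = 0 := by
      have hdvd1 : (X - C ρ) ∣ ∑ s', (q s')^2 :=
        dvd_trans (dvd_pow_self (X - C ρ) (by omega : 2*(n+1) ≠ 0)) hdvd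
      have heval : (∑ s', (q s')^2).eval ρ = 0 := by
        obtain ⟨c, hc⟩ := hdvd1
        rw [hc, eval_mul]
        simp
      rw [eval_finset_sum] at heval
      have hterm : ∀ s' ∈ (univ : Finset (Fin N)), 0 ≤ ((q s')^2).eval ρ := by
        intro s' _
        rw [eval_pow]
        exact sq_nonneg _
      have := (Finset.sum_eq_zero_iff_of_nonneg hterm).1 heval
      intro s'
      have h2 := this s' (Finset.mem_univ s')
      rw [eval_pow] at h2
      exact pow_eq_zero_iff (by omega) |>.1 h2
    set u : Fin N → Polynomial ℝ := fun s' => (q s') /ₘ (X - C ρ) with hu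
    have hqu : ∀ s', q s' = (X - C ρ) * u s' := fun s' =>
      (mul_divByMonic_eq_iff_isRoot.2 (hroot s')).symm
    have hFfac : ∑ s', (q s')^2 = (X - C ρ)^2 * ∑ s', (u s')^2 := by
      rw [Finset.mul_sum]
      refine Finset.sum_congr rfl fun s' _ => ?_
      rw [hqu s']
      ring
    have hne2 : (∑ s', (u s')^2) ≠ 0 := fun hz => hne (by rw [hFfac, hz, mul_zero])
    have hdvd2 : (X - C ρ)^(2*n) ∣ ∑ s', (u s')^2 := by
      have h2 : ((X - C ρ):Polynomial ℝ)^(2*(n+1)) = (X - C ρ)^2 * (X - C ρ)^(2*n) := by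
        rw [← pow_add]
        congr 1
        omega
      rw [hFfac, h2] at hdvd
      exact (mul_dvd_mul_iff_left (pow_ne_zero 2 (X_sub_C_ne_zero ρ))).1 hdvd
    rw [hqu s, pow_succ']
    exact mul_dvd_mul_left _ (ih N u hne2 hdvd2 s)

end Stmt12
/-- The Gram spectrahedron of a univariate real polynomial `g` of degree at most `2m`:
the set of positive semidefinite real symmetric `(m+1) × (m+1)` matrices `Q` with
`g = Xᵀ Q X`, where `X = (1, x, …, x^m)ᵀ`. -/
def GramS (m : ℕ) (g : Polynomial ℝ) : Set (Matrix (Fin (m + 1)) (Fin (m + 1)) ℝ) :=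
  {Q | Q.PosSemidef ∧
    g = ∑ i : Fin (m + 1), ∑ j : Fin (m + 1), C (Q i j) * X ^ ((i : ℕ) + (j : ℕ))}

/-- Let `f` be a univariate real polynomial of degree `2d`, nonnegative on `ℝ`,
written as `f = (x−r₁)^{2e₁} ⋯ (x−r_k)^{2e_k} · g` with `r₁, …, r_k` distinct reals,
`e₁, …, e_k` positive, `e = e₁ + ⋯ + e_k` and `g` of degree `2(d−e)` strictly positive on `ℝ`.
Then some injective linear map `T` between the corresponding matrix spaces maps `GramS(g)`
bijectively onto `GramS(f)`; in particular the affine span of `GramS(f)` has dimension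
`C(d−e, 2)`. -/
theorem stmt_12 (d k : ℕ) (f g : Polynomial ℝ)
    (r : Fin k → ℝ) (hr : Function.Injective r)
    (e : Fin k → ℕ) (he : ∀ i, 0 < e i) (hed : ∑ i, e i ≤ d)
    (hf : f = (∏ i, (X - C (r i)) ^ (2 * e i)) * g)
    (hfdeg : f.natDegree = 2 * d) (hfnonneg : ∀ x : ℝ, 0 ≤ f.eval x)
    (hgdeg : g.natDegree = 2 * (d - ∑ i, e i)) (hgpos : ∀ x : ℝ, 0 < g.eval x) :
    (∃ T : Matrix (Fin (d - ∑ i, e i + 1)) (Fin (d - ∑ i, e i + 1)) ℝ →ₗ[ℝ]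
            Matrix (Fin (d + 1)) (Fin (d + 1)) ℝ,
        Function.Injective T ∧
        Set.BijOn T (GramS (d - ∑ i, e i) g) (GramS d f)) ∧
    Module.finrank ℝ (affineSpan ℝ (GramS d f)).direction = (d - ∑ i, e i).choose 2 := by
  classical
  set E := ∑ i, e i with hE
  set m := d - E with hm
  have hmE : m + E = d := by omega
  set p := ∏ i, (X - C (r i)) ^ (e i) with hp
  have hpmonic : p.Monic := monic_prod_of_monic _ _ fun i _ => (monic_X_sub_C (r i)).pow (e i)
  have hpne : p ≠ 0 := hpmonic.ne_zero
  have hpdeg : p.natDegree = E := by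
    rw [hp, natDegree_prod _ _ (fun i _ => pow_ne_zero _ (X_sub_C_ne_zero (r i))), hE]
    refine Finset.sum_congr rfl fun i _ => ?_
    rw [natDegree_pow, natDegree_X_sub_C, mul_one]
  have hfp : f = p^2 * g := by
    rw [hf, hp, ← Finset.prod_pow]
    congr 1
    refine Finset.prod_congr rfl fun i _ => ?_
    rw [← pow_mul, mul_comm (e i) 2]
  have hgne : g ≠ 0 := fun hz => by have := hgpos 0; rw [hz] at this; simp at this
  have hgdeg' : g.natDegree = 2 * m := by rw [hgdeg, hm, hE]
  have hfne : f ≠ 0 := by rw [hfp]; exact mul_ne_zero (pow_ne_zero _ hpne) hgne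
  set M : Matrix (Fin (m+1)) (Fin (d+1)) ℝ :=
    Matrix.of fun i a => (p * X^(i:ℕ)).coeff a with hMdef
  have hrow : ∀ i : Fin (m+1), Stmt12.pv d (M i) = p * X^(i:ℕ) := by
    intro i
    have hd1 : (p * X^(i:ℕ)).natDegree ≤ d := by
      refine natDegree_mul_le.trans ?_
      rw [hpdeg, natDegree_X_pow]
      have := i.isLt
      omega
    exact Stmt12.pv_coeff d _ hd1
  set T := Stmt12.conjL m d M with hT
  have hTinj : Function.Injective T :=
    Stmt12.conjL_inj m d M p hpne (by rw [hpdeg]; omega) hrow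
  have hmaps : Set.MapsTo T (GramS m g) (GramS d f) := by
    rintro Q ⟨hpsd, hgp⟩
    constructor
    · have := hpsd.mul_mul_conjTranspose_same (B := Mᵀ)
      rwa [Matrix.conjTranspose_eq_transpose_of_trivial, Matrix.transpose_transpose] at this
    · show f = Stmt12.gp d (T Q)
      rw [hT, Stmt12.conjL_apply, Stmt12.gp_conj m d M p hrow, hfp]
      exact congrArg (fun z => p^2 * z) hgp
  have hsurj : Set.SurjOn T (GramS m g) (GramS d f) := by
    rintro Q ⟨hpsd, hgp⟩
    obtain ⟨B, hB⟩ : ∃ B : Matrix (Fin (d+1)) (Fin (d+1)) ℝ, Q = Bᴴ * B := by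
      open scoped MatrixOrder in
      obtain ⟨B, hB⟩ := CStarAlgebra.nonneg_iff_eq_star_mul_self.mp hpsd.nonneg
      exact ⟨B, hB⟩
    rw [Matrix.conjTranspose_eq_transpose_of_trivial] at hB
    set q : Fin (d+1) → Polynomial ℝ := fun s => Stmt12.pv d (B s) with hq
    have hf2 : f = ∑ s, (q s)^2 := by
      rw [hgp]
      show Stmt12.gp d Q = _
      rw [hB, Stmt12.gp_transpose_mul]
    have hfsne : (∑ s, (q s)^2) ≠ 0 := by rw [← hf2]; exact hfne
    have hqdvd : ∀ s, p ∣ q s := by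
      intro s
      rw [hp]
      refine Finset.prod_dvd_of_coprime ?_ (fun i _ => ?_)
      · intro i _ j _ hij
        exact ((Polynomial.pairwise_coprime_X_sub_C hr) hij).pow
      · refine Stmt12.sq_sum_dvd (r i) (e i) (d+1) q hfsne ?_ s
        rw [← hf2, hf]
        exact Dvd.dvd.mul_right (Finset.dvd_prod_of_mem _ (Finset.mem_univ i)) g
    set H : Fin (d+1) → Polynomial ℝ := fun s => (q s) /ₘ p with hH
    have hqH : ∀ s, q s = p * H s := by
      intro s
      have h1 := Polynomial.modByMonic_add_div (q s) p
      have h2 : (q s) %ₘ p = 0 := (Polynomial.modByMonic_eq_zero_iff_dvd hpmonic).2 (hqdvd s)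
      rw [h2, zero_add] at h1
      exact h1.symm
    have hHdeg : ∀ s, (H s).natDegree ≤ m := by
      intro s
      rcases eq_or_ne (H s) 0 with hz | hz
      · rw [hz]; simp
      · have h1 : (q s).natDegree ≤ d := Stmt12.natDegree_pv_le d _
        rw [hqH s, natDegree_mul hpne hz, hpdeg] at h1
        omega
    set B' : Matrix (Fin (d+1)) (Fin (m+1)) ℝ := Matrix.of fun s i => (H s).coeff i with hB'
    have hB'row : ∀ s, (fun i : Fin (m+1) => (H s).coeff (i:ℕ)) = B' s := fun s => rfl
    refine ⟨B'ᵀ * B', ⟨?_, ?_⟩, ?_⟩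
    · exact Stmt12.psd_tmul B'
    · show g = Stmt12.gp m (B'ᵀ * B')
      have h1 : Stmt12.gp m (B'ᵀ * B') = ∑ s, (H s)^2 := by
        rw [Stmt12.gp_transpose_mul]
        refine Finset.sum_congr rfl fun s _ => ?_
        congr 1
        rw [← hB'row s]
        exact Stmt12.pv_coeff m (H s) (hHdeg s)
      have h2 : p^2 * g = p^2 * ∑ s, (H s)^2 := by
        rw [← hfp, hf2, Finset.mul_sum]
        refine Finset.sum_congr rfl fun s _ => ?_
        rw [hqH s]
        ring
      rw [h1]
      exact mul_left_cancel₀ (pow_ne_zero 2 hpne) h2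
    · show T (B'ᵀ * B') = Q
      have hBM : B' * M = B := by
        ext s a
        rw [Matrix.mul_apply]
        have hexp : p * Stmt12.pv m (fun i : Fin (m+1) => (H s).coeff (i:ℕ))
            = ∑ i : Fin (m+1), C ((H s).coeff (i:ℕ)) * (p * X^(i:ℕ)) := by
          rw [Stmt12.pv, Finset.mul_sum]
          exact Finset.sum_congr rfl fun i _ => by ring
        have h1 : ∑ i : Fin (m+1), B' s i * M i a
            = (p * Stmt12.pv m (fun i : Fin (m+1) => (H s).coeff (i:ℕ))).coeff a := by
          rw [hexp, finset_sum_coeff]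
          refine Finset.sum_congr rfl fun i _ => ?_
          rw [coeff_C_mul]
          rfl
        rw [h1, Stmt12.pv_coeff m (H s) (hHdeg s), ← hqH s, hq]
        exact Stmt12.coeff_pv d (B s) a
      rw [hT, Stmt12.conjL_apply]
      have hassoc : Mᵀ * (B'ᵀ * B') * M = (B' * M)ᵀ * (B' * M) := by
        simp only [Matrix.transpose_mul, Matrix.mul_assoc]
      rw [hassoc, hBM, ← hB]
  have hbij : Set.BijOn T (GramS m g) (GramS d f) := ⟨hmaps, hTinj.injOn, hsurj⟩
  refine ⟨⟨T, hTinj, hbij⟩, ?_⟩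
  have himg : GramS d f = ⇑T '' (GramS m g) := (hbij.image_eq).symm
  rw [himg]
  have hspan : affineSpan ℝ (⇑T '' (GramS m g))
      = (affineSpan ℝ (GramS m g)).map T.toAffineMap := by
    rw [AffineSubspace.map_span]
    congr 1
  rw [hspan, AffineSubspace.map_direction, LinearMap.toAffineMap_linear]
  have hdir : (affineSpan ℝ (GramS m g)).direction = Stmt12.V0 m :=
    Stmt12.direction_gram m g hgdeg' hgpos
  rw [hdir]
  have hfr := (Submodule.equivMapOfInjective T hTinj (Stmt12.V0 m)).finrank_eq
  rw [← hfr]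
  exact Stmt12.finrank_V0 m
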